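/- Duality of shortest paths in the dynamic graph: for all 0 ≤ i < k < j ≤ n with k+1 < j, the minimum total weight over directed paths in D_n from (−1,−1) to (i,j) whose final edge is the horizontal jump (i,k)→(i,j) equals the minimum total weight over directed paths from (−1,−1) to (i,j) whose final edge is the vertical jump (k+1,j)→(i,j), and both minima equal Tree[i,k] + Tree[k+1,j] + w(i,j). Consequently, if a shortest path from (−1,−1) to (i,j) contains the horizontal jump (i,k)→(i,j) as its final edge, then there exists a shortest path (of the same minimal weight) containing the vertical jump (k+1,j)→(i,j) as its final edge, and vice versa. -/

import Mathlib

/-- The weighted edges of the dynamic graph `D_n`.  Vertices live in `ℤ × ℤ`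
(the source is `(-1,-1)`; all other vertices `(i,j)` have `0 ≤ i ≤ j ≤ n`).
`Edge n Q w T u v c` means there is an edge from `u` to `v` of weight `c`. -/
inductive Edge (n : ℕ) (Q : ℕ → ℝ) (w T : ℕ → ℕ → ℝ) : ℤ × ℤ → ℤ × ℤ → ℝ → Prop
  | init (i : ℕ) (h : i ≤ n) :
      Edge n Q w T (-1, -1) ((i : ℤ), (i : ℤ)) (Q i)
  | horiz (i j : ℕ) (h1 : i ≤ j) (h2 : j < n) :
      Edge n Q w T ((i : ℤ), (j : ℤ)) ((i : ℤ), ((j + 1 : ℕ) : ℤ))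
        (Q (j + 1) + w i (j + 1))
  | vert (i j : ℕ) (h0 : 0 < i) (h1 : i ≤ j) (h2 : j ≤ n) :
      Edge n Q w T ((i : ℤ), (j : ℤ)) (((i - 1 : ℕ) : ℤ), (j : ℤ))
        (Q (i - 1) + w (i - 1) j)
  | hjump (i k j : ℕ) (h1 : i < k) (h2 : k < j) (h3 : j ≤ n) :
      Edge n Q w T ((i : ℤ), (k : ℤ)) ((i : ℤ), (j : ℤ)) (T (k + 1) j + w i j)
  | vjump (i k j : ℕ) (h1 : i ≤ k) (h2 : k + 1 < j) (h3 : j ≤ n) :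
      Edge n Q w T (((k + 1 : ℕ) : ℤ), (j : ℤ)) ((i : ℤ), (j : ℤ)) (T i k + w i j)

/-- `Walk E u v c` : there is a directed path (a finite sequence of consecutive
edges) from `u` to `v` of total weight `c` in the graph whose weighted edge
relation is `E`. -/
inductive Walk {α : Type*} (E : α → α → ℝ → Prop) : α → α → ℝ → Prop
  | nil (a : α) : Walk E a a 0
  | cons {a b d : α} {c c' : ℝ} (h : E a b c) (hw : Walk E b d c') :
      Walk E a d (c + c')

section Aux

variable {n : ℕ} {Q : ℕ → ℝ} {w Tree : ℕ → ℕ → ℝ}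

/-- Append an edge at the end of a walk. -/
lemma Walk.snoc {α : Type*} {E : α → α → ℝ → Prop} {a b d : α} {c c' : ℝ}
    (h : Walk E a b c) (he : E b d c') : Walk E a d (c + c') := by
  induction h with
  | nil a => simpa using Walk.cons he (Walk.nil d)
  | cons h1 h2 ih =>
      have h3 := Walk.cons h1 (ih he)
      rwa [← add_assoc] at h3

/-- Potential function on vertices. -/
def fv (Tree : ℕ → ℕ → ℝ) (p : ℤ × ℤ) : ℝ :=
  if p.1 = -1 then 0 else Tree p.1.toNat p.2.toNat

lemma fv_nat (Tree : ℕ → ℕ → ℝ) (i j : ℕ) :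
    fv Tree ((i : ℤ), (j : ℤ)) = Tree i j := by
  simp only [fv]
  rw [if_neg (by omega), Int.toNat_natCast, Int.toNat_natCast]

lemma fv_src (Tree : ℕ → ℕ → ℝ) : fv Tree (-1, -1) = 0 := by
  simp [fv]

lemma tree_le
    (hTree : ∀ i j (hij : i < j), j ≤ n →
      Tree i j = (Finset.Ico i j).inf' (Finset.nonempty_Ico.mpr hij)
        (fun k => Tree i k + Tree (k + 1) j + w i j))
    {i k j : ℕ} (hik : i ≤ k) (hkj : k < j) (hjn : j ≤ n) :
    Tree i j ≤ Tree i k + Tree (k + 1) j + w i j := by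
  rw [hTree i j (lt_of_le_of_lt hik hkj) hjn]
  exact Finset.inf'_le _ (Finset.mem_Ico.mpr ⟨hik, hkj⟩)

lemma edge_ineq
    (hTree0 : ∀ i, i ≤ n → Tree i i = Q i)
    (hTree : ∀ i j (hij : i < j), j ≤ n →
      Tree i j = (Finset.Ico i j).inf' (Finset.nonempty_Ico.mpr hij)
        (fun k => Tree i k + Tree (k + 1) j + w i j))
    {a b : ℤ × ℤ} {c : ℝ} (h : Edge n Q w Tree a b c) :
    fv Tree b ≤ fv Tree a + c := by
  cases h with
  | init i h =>
      rw [fv_nat, fv_src, hTree0 i h]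
      simp
  | horiz i j h1 h2 =>
      rw [fv_nat, fv_nat]
      have h3 := tree_le hTree h1 (Nat.lt_succ_self j) (by omega)
      rw [hTree0 (j + 1) (by omega)] at h3
      linarith
  | vert i j h0 h1 h2 =>
      rw [fv_nat, fv_nat]
      have h3 := tree_le hTree (le_refl (i - 1)) (by omega) h2
      rw [hTree0 (i - 1) (by omega)] at h3
      have h4 : i - 1 + 1 = i := by omega
      rw [h4] at h3
      linarith
  | hjump i k j h1 h2 h3 =>
      rw [fv_nat, fv_nat]
      have h4 := tree_le hTree h1.le h2 h3
      linarith
  | vjump i k j h1 h2 h3 =>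
      rw [fv_nat, fv_nat]
      have h4 := tree_le hTree h1 (by omega) h3
      linarith

lemma walk_lb
    (hTree0 : ∀ i, i ≤ n → Tree i i = Q i)
    (hTree : ∀ i j (hij : i < j), j ≤ n →
      Tree i j = (Finset.Ico i j).inf' (Finset.nonempty_Ico.mpr hij)
        (fun k => Tree i k + Tree (k + 1) j + w i j))
    {a b : ℤ × ℤ} {c : ℝ} (h : Walk (Edge n Q w Tree) a b c) :
    fv Tree b ≤ fv Tree a + c := by
  induction h with
  | nil a => simp
  | cons he hw ih =>
      have h2 := edge_ineq hTree0 hTree he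
      linarith

lemma walk_exists
    (hTree0 : ∀ i, i ≤ n → Tree i i = Q i)
    (hTree : ∀ i j (hij : i < j), j ≤ n →
      Tree i j = (Finset.Ico i j).inf' (Finset.nonempty_Ico.mpr hij)
        (fun k => Tree i k + Tree (k + 1) j + w i j)) :
    ∀ d i j : ℕ, j - i ≤ d → i ≤ j → j ≤ n →
      Walk (Edge n Q w Tree) (-1, -1) ((i : ℤ), (j : ℤ)) (Tree i j) := by
  intro d
  induction d with
  | zero =>
      intro i j hd hij hjn
      have hij' : i = j := by omega
      subst hij'
      have h1 := Walk.cons (Edge.init (n := n) (Q := Q) (w := w) (T := Tree) i hjn)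
        (Walk.nil ((i : ℤ), (i : ℤ)))
      rw [hTree0 i hjn]
      simpa using h1
  | succ d ih =>
      intro i j hd hij hjn
      rcases eq_or_lt_of_le hij with rfl | hlt
      · have h1 := Walk.cons (Edge.init (n := n) (Q := Q) (w := w) (T := Tree) i hjn)
          (Walk.nil ((i : ℤ), (i : ℤ)))
        rw [hTree0 i hjn]
        simpa using h1
      · obtain ⟨k, hk, hval⟩ := Finset.exists_mem_eq_inf'
          (Finset.nonempty_Ico.mpr hlt) (fun k => Tree i k + Tree (k + 1) j + w i j)
        rw [Finset.mem_Ico] at hk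
        rw [hTree i j hlt hjn, hval]
        rcases eq_or_lt_of_le hk.1 with rfl | hik
        · -- k = i : use vertical unit edge from (i+1, j)
          have hw1 := ih (i + 1) j (by omega) (by omega) hjn
          have he : Edge n Q w Tree (((i + 1 : ℕ) : ℤ), (j : ℤ))
              (((i + 1 - 1 : ℕ) : ℤ), (j : ℤ)) (Q (i + 1 - 1) + w (i + 1 - 1) j) :=
            Edge.vert (i + 1) j (by omega) (by omega) hjn
          simp only [Nat.add_sub_cancel] at he
          have h2 := Walk.snoc hw1 he
          rw [hTree0 i (by omega)]
          convert h2 using 1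
          ring
        · -- i < k : use horizontal jump from (i, k)
          have hw1 := ih i k (by omega) (by omega) (by omega)
          have h2 := Walk.snoc hw1 (Edge.hjump i k j hik hk.2 hjn)
          convert h2 using 1
          ring

end Aux

/-- Duality of shortest paths in the dynamic graph: for all `0 ≤ i < k < j ≤ n`
with `k+1 < j`, the minimum total weight over directed paths in `D_n` from
`(−1,−1)` to `(i,j)` whose final edge is the horizontal jump `(i,k)→(i,j)`
equals the minimum total weight over directed paths whose final edge is the
vertical jump `(k+1,j)→(i,j)`, and both minima equal
`Tree[i,k] + Tree[k+1,j] + w(i,j)`.  Consequently, a weight `c` of a shortest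
path from `(−1,−1)` to `(i,j)` is achieved by a path whose final edge is the
horizontal jump `(i,k)→(i,j)` iff it is achieved by a path (of the same minimal
weight) whose final edge is the vertical jump `(k+1,j)→(i,j)`. -/
theorem stmt8 (n : ℕ) (hn : 1 ≤ n) (P Q : ℕ → ℝ)
    (hP : ∀ t, 1 ≤ t → t ≤ n → 0 ≤ P t) (hQ : ∀ t, t ≤ n → 0 ≤ Q t)
    (w : ℕ → ℕ → ℝ)
    (hw : ∀ i j, i ≤ j → j ≤ n →
      w i j = (∑ t ∈ Finset.Icc (i + 1) j, P t) + ∑ t ∈ Finset.Icc i j, Q t)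
    (Tree : ℕ → ℕ → ℝ)
    (hTree0 : ∀ i, i ≤ n → Tree i i = Q i)
    (hTree : ∀ i j (hij : i < j), j ≤ n →
      Tree i j = (Finset.Ico i j).inf' (Finset.nonempty_Ico.mpr hij)
        (fun k => Tree i k + Tree (k + 1) j + w i j)) :
    ∀ i k j : ℕ, i < k → k < j → k + 1 < j → j ≤ n →
      IsLeast { c : ℝ | ∃ c' : ℝ,
          Walk (Edge n Q w Tree) (-1, -1) ((i : ℤ), (k : ℤ)) c' ∧
          c = c' + (Tree (k + 1) j + w i j) }
        (Tree i k + Tree (k + 1) j + w i j) ∧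
      IsLeast { c : ℝ | ∃ c' : ℝ,
          Walk (Edge n Q w Tree) (-1, -1) (((k + 1 : ℕ) : ℤ), (j : ℤ)) c' ∧
          c = c' + (Tree i k + w i j) }
        (Tree i k + Tree (k + 1) j + w i j) ∧
      ∀ c : ℝ,
        IsLeast { c : ℝ |
            Walk (Edge n Q w Tree) (-1, -1) ((i : ℤ), (j : ℤ)) c } c →
        ((∃ c' : ℝ,
            Walk (Edge n Q w Tree) (-1, -1) ((i : ℤ), (k : ℤ)) c' ∧
            c = c' + (Tree (k + 1) j + w i j)) ↔
         (∃ c' : ℝ,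
            Walk (Edge n Q w Tree) (-1, -1) (((k + 1 : ℕ) : ℤ), (j : ℤ)) c' ∧
            c = c' + (Tree i k + w i j))) := by
  intro i k j hik hkj hk1j hjn
  have hw_ik : Walk (Edge n Q w Tree) (-1, -1) ((i : ℤ), (k : ℤ)) (Tree i k) :=
    walk_exists hTree0 hTree (k - i) i k le_rfl hik.le (by omega)
  have hw_kj : Walk (Edge n Q w Tree) (-1, -1) (((k + 1 : ℕ) : ℤ), (j : ℤ))
      (Tree (k + 1) j) :=
    walk_exists hTree0 hTree (j - (k + 1)) (k + 1) j le_rfl (by omega) hjn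
  have lb : ∀ (a b : ℕ) (c' : ℝ),
      Walk (Edge n Q w Tree) (-1, -1) ((a : ℤ), (b : ℤ)) c' → Tree a b ≤ c' := by
    intro a b c' hwc
    have h1 := walk_lb hTree0 hTree hwc
    rwa [fv_nat, fv_src, zero_add] at h1
  have part1 : IsLeast { c : ℝ | ∃ c' : ℝ,
      Walk (Edge n Q w Tree) (-1, -1) ((i : ℤ), (k : ℤ)) c' ∧
      c = c' + (Tree (k + 1) j + w i j) }
      (Tree i k + Tree (k + 1) j + w i j) := by
    constructor
    · exact ⟨Tree i k, hw_ik, by ring⟩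
    · rintro c ⟨c', hwc, rfl⟩
      have := lb i k c' hwc
      linarith
  have part2 : IsLeast { c : ℝ | ∃ c' : ℝ,
      Walk (Edge n Q w Tree) (-1, -1) (((k + 1 : ℕ) : ℤ), (j : ℤ)) c' ∧
      c = c' + (Tree i k + w i j) }
      (Tree i k + Tree (k + 1) j + w i j) := by
    constructor
    · exact ⟨Tree (k + 1) j, hw_kj, by ring⟩
    · rintro c ⟨c', hwc, rfl⟩
      have := lb (k + 1) j c' hwc
      linarith
  refine ⟨part1, part2, ?_⟩
  intro c hc
  have hM : Walk (Edge n Q w Tree) (-1, -1) ((i : ℤ), (j : ℤ))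
      (Tree i k + (Tree (k + 1) j + w i j)) :=
    Walk.snoc hw_ik (Edge.hjump i k j hik hkj hjn)
  have hcM : c ≤ Tree i k + (Tree (k + 1) j + w i j) := hc.2 hM
  constructor
  · intro h
    have h1 : Tree i k + Tree (k + 1) j + w i j ≤ c := part1.2 h
    have hcEq : c = Tree i k + Tree (k + 1) j + w i j := by linarith
    rw [hcEq]
    exact part2.1
  · intro h
    have h1 : Tree i k + Tree (k + 1) j + w i j ≤ c := part2.2 h
    have hcEq : c = Tree i k + Tree (k + 1) j + w i j := by linarith
    rw [hcEq]
    exact part1.1
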